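/- Let s ≥ 1, let f : X → ℂ be measurable with ‖f‖_{−s}² := ∫_X ω^{−s}|f|² dμ < ∞, let n ≥ 1, and let Ψ : Xⁿ → ℂ be measurable and symmetric with ∫_{Xⁿ} (Σ_{j=1}^n ω(k_j))^s |Ψ|² dμⁿ < ∞. Then for μ^{n−1}-almost every (k_1,…,k_{n−1}) ∈ X^{n−1} the function k ↦ conj(f(k))·Ψ(k_1,…,k_{n−1},k) is μ-integrable, and n·∫_{X^{n−1}} |∫_X conj(f(k)) Ψ(k_1,…,k_{n−1},k) dμ(k)|² dμ^{n−1} ≤ ‖f‖_{−s}² · ∫_{Xⁿ} (Σ_{j=1}^n ω(k_j))^s |Ψ|² dμⁿ. (This is the n-particle-sector content of the boundedness of the singular annihilation operator a(f) : F_s → F, with operator norm at most ‖f‖_{−s}.) -/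

import Mathlib

open MeasureTheory ENNReal

lemma my_measurePreserving_comp_perm {X : Type*} [MeasurableSpace X] (μ : Measure X)
    [SigmaFinite μ] {ι : Type*} [Fintype ι] (σ : Equiv.Perm ι) :
    MeasurePreserving (fun g : ι → X => g ∘ σ)
      (Measure.pi fun _ : ι => μ) (Measure.pi fun _ : ι => μ) := by
  have hmeas : Measurable (fun g : ι → X => g ∘ σ) :=
    measurable_pi_lambda _ fun i => measurable_pi_apply _
  have hmap : Measure.map (fun g : ι → X => g ∘ σ) (Measure.pi fun _ : ι => μ)
      = Measure.pi fun _ : ι => μ := by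
    refine (Measure.pi_eq fun t ht => ?_).symm
    rw [Measure.map_apply hmeas (MeasurableSet.univ_pi ht)]
    have hpre : (fun g : ι → X => g ∘ σ) ⁻¹' (Set.pi Set.univ t)
        = Set.pi Set.univ (fun j => t (σ.symm j)) := by
      ext g
      simp only [Set.mem_preimage, Set.mem_univ_pi, Function.comp]
      constructor
      · intro h j; simpa using h (σ.symm j)
      · intro h i; simpa using h (σ i)
    rw [hpre, Measure.pi_pi]
    exact Equiv.prod_comp σ.symm fun j => μ (t j)
  exact ⟨hmeas, hmap⟩

lemma my_measurable_snoc {X : Type*} [MeasurableSpace X] {n : ℕ} :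
    Measurable fun z : (Fin n → X) × X => (Fin.snoc z.1 z.2 : Fin (n + 1) → X) := by
  apply measurable_pi_lambda
  intro i
  induction i using Fin.lastCases with
  | last => simpa using measurable_snd
  | cast j =>
    have h : Measurable fun c : (Fin n → X) × X => c.1 j := (measurable_pi_apply j).comp measurable_fst
    simpa using h

lemma my_lintegral_pi_snoc {X : Type*} [MeasurableSpace X] (μ : Measure X) [SigmaFinite μ]
    {n : ℕ} (G : (Fin (n + 1) → X) → ℝ≥0∞) (hG : Measurable G) :
    ∫⁻ g, G g ∂(Measure.pi fun _ : Fin (n + 1) => μ)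
      = ∫⁻ k, ∫⁻ κ, G (Fin.snoc k κ) ∂μ ∂(Measure.pi fun _ : Fin n => μ) := by
  set e := MeasurableEquiv.piFinSuccAbove (fun _ : Fin (n + 1) => X) (Fin.last n) with he
  have h := (measurePreserving_piFinSuccAbove (fun _ : Fin (n + 1) => μ) (Fin.last n)).symm
  calc ∫⁻ g, G g ∂(Measure.pi fun _ : Fin (n + 1) => μ)
      = ∫⁻ z, G (e.symm z) ∂((μ : Measure X).prod (Measure.pi fun _ : Fin n => μ)) :=
        (h.lintegral_comp hG).symm
    _ = ∫⁻ k, ∫⁻ κ, G (e.symm (κ, k)) ∂μ ∂(Measure.pi fun _ : Fin n => μ) :=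
        lintegral_prod_symm' _ (hG.comp e.symm.measurable)
    _ = ∫⁻ k, ∫⁻ κ, G (Fin.snoc k κ) ∂μ ∂(Measure.pi fun _ : Fin n => μ) := by
        congr 1; ext k; congr 1; ext κ; congr 1
        simp [he, MeasurableEquiv.piFinSuccAbove, Fin.snocEquiv]

lemma my_sum_rpow_le {ι : Type*} [Fintype ι] [Nonempty ι] (x : ι → ℝ) (hx : ∀ i, 0 < x i)
    {s : ℝ} (hs : 1 ≤ s) : ∑ i, x i ^ s ≤ (∑ i, x i) ^ s := by
  have hT : 0 < ∑ i, x i := Finset.sum_pos (fun i _ => hx i) Finset.univ_nonempty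
  have key : ∀ i, x i ^ s ≤ x i * (∑ j, x j) ^ (s - 1) := by
    intro i
    have h1 : x i ^ s = x i ^ (s - 1) * x i := by
      have h2 := Real.rpow_add (hx i) (s - 1) 1
      rw [Real.rpow_one] at h2
      simpa using h2
    rw [h1, mul_comm]
    refine mul_le_mul_of_nonneg_left ?_ (hx i).le
    exact Real.rpow_le_rpow (hx i).le
      (Finset.single_le_sum (fun j _ => (hx j).le) (Finset.mem_univ i)) (by linarith)
  calc ∑ i, x i ^ s ≤ ∑ i, x i * (∑ j, x j) ^ (s - 1) := Finset.sum_le_sum fun i _ => key i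
    _ = (∑ i, x i) * (∑ j, x j) ^ (s - 1) := by rw [Finset.sum_mul]
    _ = (∑ i, x i) ^ s := by
        have h2 := Real.rpow_add hT 1 (s - 1)
        rw [Real.rpow_one] at h2
        rw [← h2]; norm_num

/-- (boundedness of the singular annihilation operator on the
`(n+1)`-particle sector, `n + 1 ≥ 1`). For `s ≥ 1`, `f ∈ H_{−s}` and a measurable
symmetric `Ψ : X^(n+1) → ℂ` with `∫ (Σ_j ω(k_j))^s |Ψ|² dμ^(n+1) < ∞`:
for a.e. `(k_1,…,k_n)` the function `κ ↦ conj(f(κ))Ψ(k_1,…,k_n,κ)` is integrable, and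
`(n+1)·∫ |∫ conj(f)Ψ(·,κ) dμ(κ)|² dμⁿ ≤ ‖f‖²_{−s} · ∫ (Σ_j ω(k_j))^s |Ψ|² dμ^(n+1)`. -/
theorem annihilation_bounded
    {X : Type*} [MeasurableSpace X] (μ : Measure X) [SigmaFinite μ]
    (ω : X → ℝ) (hω : Measurable ω) (m : ℝ) (hm : 0 < m) (hωm : ∀ k, m ≤ ω k)
    (s : ℝ) (hs : 1 ≤ s)
    (f : X → ℂ) (hf : Measurable f)
    (hfs : (∫⁻ k, ENNReal.ofReal (ω k ^ (-s) * ‖f k‖ ^ 2) ∂μ) ≠ ⊤)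
    (n : ℕ) (Ψ : (Fin (n + 1) → X) → ℂ) (hΨ : Measurable Ψ)
    (hsym : ∀ σ : Equiv.Perm (Fin (n + 1)), ∀ k : Fin (n + 1) → X, Ψ (k ∘ σ) = Ψ k)
    (hΨs : (∫⁻ k, ENNReal.ofReal ((∑ j : Fin (n + 1), ω (k j)) ^ s * ‖Ψ k‖ ^ 2)
        ∂(Measure.pi fun _ : Fin (n + 1) => μ)) ≠ ⊤) :
    (∀ᵐ k ∂(Measure.pi fun _ : Fin n => μ),
      Integrable (fun κ => (starRingEnd ℂ) (f κ) * Ψ (Fin.snoc k κ)) μ) ∧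
    ((n : ℝ≥0∞) + 1) *
        ∫⁻ k, ENNReal.ofReal (‖∫ κ, (starRingEnd ℂ) (f κ) * Ψ (Fin.snoc k κ) ∂μ‖ ^ 2)
          ∂(Measure.pi fun _ : Fin n => μ) ≤
      (∫⁻ k, ENNReal.ofReal (ω k ^ (-s) * ‖f k‖ ^ 2) ∂μ) *
        ∫⁻ k, ENNReal.ofReal ((∑ j : Fin (n + 1), ω (k j)) ^ s * ‖Ψ k‖ ^ 2)
          ∂(Measure.pi fun _ : Fin (n + 1) => μ) := by
  classical
  have hωpos : ∀ k, 0 < ω k := fun k => lt_of_lt_of_le hm (hωm k)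
  set νn := (Measure.pi fun _ : Fin n => μ) with hνn
  set ν := (Measure.pi fun _ : Fin (n + 1) => μ) with hν
  set A := ∫⁻ k, ENNReal.ofReal (ω k ^ (-s) * ‖f k‖ ^ 2) ∂μ with hA
  set C := ∫⁻ k, ENNReal.ofReal ((∑ j : Fin (n + 1), ω (k j)) ^ s * ‖Ψ k‖ ^ 2) ∂ν with hC
  -- measurability
  have hsnoc_k : ∀ k : Fin n → X, Measurable fun κ : X => Ψ (Fin.snoc k κ) :=
    fun k => hΨ.comp (my_measurable_snoc.comp (measurable_const.prodMk measurable_id))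
  have hFmeas : Measurable fun z : (Fin n → X) × X =>
      ENNReal.ofReal (ω z.2 ^ s * ‖Ψ (Fin.snoc z.1 z.2)‖ ^ 2) := by
    apply ENNReal.measurable_ofReal.comp
    exact ((hω.comp measurable_snd).pow measurable_const).mul
      ((hΨ.comp my_measurable_snoc).norm.pow_const 2)
  set B : (Fin n → X) → ℝ≥0∞ :=
    fun k => ∫⁻ κ, ENNReal.ofReal (ω κ ^ s * ‖Ψ (Fin.snoc k κ)‖ ^ 2) ∂μ with hB
  have hBmeas : Measurable B := Measurable.lintegral_prod_right' hFmeas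
  -- Cauchy-Schwarz
  have hCS : ∀ k : Fin n → X,
      ∫⁻ κ, ENNReal.ofReal ‖(starRingEnd ℂ) (f κ) * Ψ (Fin.snoc k κ)‖ ∂μ
        ≤ A ^ (1 / 2 : ℝ) * B k ^ (1 / 2 : ℝ) := by
    intro k
    set g : X → ℝ≥0∞ := fun κ => ENNReal.ofReal (ω κ ^ (-(s / 2)) * ‖f κ‖) with hg
    set h : X → ℝ≥0∞ := fun κ => ENNReal.ofReal (ω κ ^ (s / 2) * ‖Ψ (Fin.snoc k κ)‖) with hh
    have hgm : Measurable g :=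
      ENNReal.measurable_ofReal.comp ((hω.pow measurable_const).mul hf.norm)
    have hhm : Measurable h :=
      ENNReal.measurable_ofReal.comp ((hω.pow measurable_const).mul (hsnoc_k k).norm)
    have hprod : ∀ κ, ENNReal.ofReal ‖(starRingEnd ℂ) (f κ) * Ψ (Fin.snoc k κ)‖
        = (g * h) κ := by
      intro κ
      simp only [Pi.mul_apply, hg, hh]
      rw [← ENNReal.ofReal_mul (mul_nonneg (Real.rpow_nonneg (hωpos κ).le _) (norm_nonneg _))]
      congr 1
      have hω1 : ω κ ^ (-(s / 2)) * ω κ ^ (s / 2) = 1 := by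
        rw [← Real.rpow_add (hωpos κ)]; simp
      have hc : ‖(starRingEnd ℂ) (f κ)‖ = ‖f κ‖ := RCLike.norm_conj _
      calc ‖(starRingEnd ℂ) (f κ) * Ψ (Fin.snoc k κ)‖
          = (ω κ ^ (-(s / 2)) * ω κ ^ (s / 2)) * (‖f κ‖ * ‖Ψ (Fin.snoc k κ)‖) := by
            rw [hω1, one_mul, norm_mul, hc]
        _ = ω κ ^ (-(s / 2)) * ‖f κ‖ * (ω κ ^ (s / 2) * ‖Ψ (Fin.snoc k κ)‖) := by ring
    have hgsq : ∀ κ, g κ ^ (2 : ℝ) = ENNReal.ofReal (ω κ ^ (-s) * ‖f κ‖ ^ 2) := by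
      intro κ
      rw [hg]
      rw [ENNReal.ofReal_rpow_of_nonneg
        (mul_nonneg (Real.rpow_nonneg (hωpos κ).le _) (norm_nonneg _)) (by norm_num)]
      congr 1
      rw [Real.mul_rpow (Real.rpow_nonneg (hωpos κ).le _) (norm_nonneg _)]
      congr 1
      · rw [← Real.rpow_mul (hωpos κ).le]
        norm_num
      · rw [← Real.rpow_natCast ‖f κ‖ 2]
        norm_num
    have hhsq : ∀ κ, h κ ^ (2 : ℝ)
        = ENNReal.ofReal (ω κ ^ s * ‖Ψ (Fin.snoc k κ)‖ ^ 2) := by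
      intro κ
      rw [hh]
      rw [ENNReal.ofReal_rpow_of_nonneg
        (mul_nonneg (Real.rpow_nonneg (hωpos κ).le _) (norm_nonneg _)) (by norm_num)]
      congr 1
      rw [Real.mul_rpow (Real.rpow_nonneg (hωpos κ).le _) (norm_nonneg _)]
      congr 1
      · rw [← Real.rpow_mul (hωpos κ).le]
        norm_num
      · rw [← Real.rpow_natCast ‖Ψ (Fin.snoc k κ)‖ 2]
        norm_num
    calc ∫⁻ κ, ENNReal.ofReal ‖(starRingEnd ℂ) (f κ) * Ψ (Fin.snoc k κ)‖ ∂μ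
        = ∫⁻ κ, (g * h) κ ∂μ := lintegral_congr hprod
      _ ≤ (∫⁻ κ, g κ ^ (2 : ℝ) ∂μ) ^ (1 / 2 : ℝ) * (∫⁻ κ, h κ ^ (2 : ℝ) ∂μ) ^ (1 / 2 : ℝ) :=
          ENNReal.lintegral_mul_le_Lp_mul_Lq μ ⟨by norm_num, by norm_num, by norm_num⟩
            hgm.aemeasurable hhm.aemeasurable
      _ = A ^ (1 / 2 : ℝ) * B k ^ (1 / 2 : ℝ) := by
          rw [lintegral_congr hgsq, lintegral_congr hhsq, hA, hB]
  -- pointwise bound on the squared integral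
  have hpt : ∀ k : Fin n → X,
      ENNReal.ofReal (‖∫ κ, (starRingEnd ℂ) (f κ) * Ψ (Fin.snoc k κ) ∂μ‖ ^ 2) ≤ A * B k := by
    intro k
    have h1 : ENNReal.ofReal ‖∫ κ, (starRingEnd ℂ) (f κ) * Ψ (Fin.snoc k κ) ∂μ‖
        ≤ ∫⁻ κ, ENNReal.ofReal ‖(starRingEnd ℂ) (f κ) * Ψ (Fin.snoc k κ)‖ ∂μ := by
      simp_rw [ofReal_norm]
      exact enorm_integral_le_lintegral_enorm _
    have h2 := h1.trans (hCS k)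
    calc ENNReal.ofReal (‖∫ κ, (starRingEnd ℂ) (f κ) * Ψ (Fin.snoc k κ) ∂μ‖ ^ 2)
        = (ENNReal.ofReal ‖∫ κ, (starRingEnd ℂ) (f κ) * Ψ (Fin.snoc k κ) ∂μ‖) ^ 2 := by
          rw [ENNReal.ofReal_pow (norm_nonneg _)]
      _ ≤ (A ^ (1 / 2 : ℝ) * B k ^ (1 / 2 : ℝ)) ^ 2 := pow_le_pow_left' h2 2
      _ = A * B k := by
          rw [mul_pow, ← ENNReal.rpow_natCast (A ^ (1 / 2 : ℝ)) 2,
            ← ENNReal.rpow_natCast (B k ^ (1 / 2 : ℝ)) 2,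
            ← ENNReal.rpow_mul, ← ENNReal.rpow_mul]
          norm_num
  -- integrate the pointwise bound
  have hint : (∫⁻ k, ENNReal.ofReal
        (‖∫ κ, (starRingEnd ℂ) (f κ) * Ψ (Fin.snoc k κ) ∂μ‖ ^ 2) ∂νn)
      ≤ A * ∫⁻ k, B k ∂νn :=
    (lintegral_mono hpt).trans (le_of_eq (lintegral_const_mul A hBmeas))
  -- rewrite ∫ B in (n+1)-fold coordinates
  have hGlast_meas : Measurable fun gk : Fin (n + 1) → X =>
      ENNReal.ofReal (ω (gk (Fin.last n)) ^ s * ‖Ψ gk‖ ^ 2) :=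
    ENNReal.measurable_ofReal.comp
      (((hω.comp (measurable_pi_apply _)).pow measurable_const).mul (hΨ.norm.pow_const 2))
  have hGi_meas : ∀ i : Fin (n + 1), Measurable fun gk : Fin (n + 1) → X =>
      ENNReal.ofReal (ω (gk i) ^ s * ‖Ψ gk‖ ^ 2) := fun i =>
    ENNReal.measurable_ofReal.comp
      (((hω.comp (measurable_pi_apply _)).pow measurable_const).mul (hΨ.norm.pow_const 2))
  have hBint : (∫⁻ k, B k ∂νn)
      = ∫⁻ gk, ENNReal.ofReal (ω (gk (Fin.last n)) ^ s * ‖Ψ gk‖ ^ 2) ∂ν := by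
    rw [hν, my_lintegral_pi_snoc μ _ hGlast_meas, hνn]
    refine lintegral_congr fun k => ?_
    refine lintegral_congr fun κ => ?_
    rw [Fin.snoc_last]
  -- symmetry
  have hD : ∀ i : Fin (n + 1),
      (∫⁻ gk, ENNReal.ofReal (ω (gk i) ^ s * ‖Ψ gk‖ ^ 2) ∂ν)
        = ∫⁻ gk, ENNReal.ofReal (ω (gk (Fin.last n)) ^ s * ‖Ψ gk‖ ^ 2) ∂ν := by
    intro i
    have hmp := my_measurePreserving_comp_perm μ (Equiv.swap i (Fin.last n))
    have hcomp := hmp.lintegral_comp hGlast_meas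
    rw [hν, ← hcomp]
    refine lintegral_congr fun gk => ?_
    have h1 : (gk ∘ (Equiv.swap i (Fin.last n))) (Fin.last n) = gk i := by
      simp [Equiv.swap_apply_right]
    rw [h1, hsym (Equiv.swap i (Fin.last n)) gk]
  -- counting and sum bound
  have hsumC : ((n : ℝ≥0∞) + 1)
      * (∫⁻ gk, ENNReal.ofReal (ω (gk (Fin.last n)) ^ s * ‖Ψ gk‖ ^ 2) ∂ν) ≤ C := by
    have hcount : ((n : ℝ≥0∞) + 1)
        * (∫⁻ gk, ENNReal.ofReal (ω (gk (Fin.last n)) ^ s * ‖Ψ gk‖ ^ 2) ∂ν)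
        = ∑ i : Fin (n + 1), ∫⁻ gk, ENNReal.ofReal (ω (gk i) ^ s * ‖Ψ gk‖ ^ 2) ∂ν := by
      rw [Finset.sum_congr rfl fun i _ => hD i, Finset.sum_const, Finset.card_univ,
        Fintype.card_fin, nsmul_eq_mul]
      push_cast
      ring
    rw [hcount, ← lintegral_finset_sum _ fun i _ => hGi_meas i, hC]
    refine lintegral_mono fun gk => ?_
    rw [← ENNReal.ofReal_sum_of_nonneg fun i _ =>
      mul_nonneg (Real.rpow_nonneg (hωpos _).le _) (by positivity)]
    apply ENNReal.ofReal_le_ofReal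
    rw [← Finset.sum_mul]
    refine mul_le_mul_of_nonneg_right ?_ (by positivity)
    exact my_sum_rpow_le (fun i => ω (gk i)) (fun i => hωpos _) hs
  have hDlastC : (∫⁻ gk, ENNReal.ofReal (ω (gk (Fin.last n)) ^ s * ‖Ψ gk‖ ^ 2) ∂ν) ≤ C := by
    rw [hC]
    refine lintegral_mono fun gk => ?_
    apply ENNReal.ofReal_le_ofReal
    refine mul_le_mul_of_nonneg_right ?_ (by positivity)
    refine Real.rpow_le_rpow (hωpos _).le ?_ (by linarith)
    exact Finset.single_le_sum (fun j _ => (hωpos (gk j)).le) (Finset.mem_univ _)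
  constructor
  · -- integrability a.e.
    have hBlt : ∀ᵐ k ∂νn, B k < ⊤ := by
      refine ae_lt_top hBmeas ?_
      rw [hBint]
      exact (hDlastC.trans_lt (lt_top_iff_ne_top.mpr hΨs)).ne
    filter_upwards [hBlt] with k hk
    refine ⟨(((Complex.continuous_conj.measurable.comp hf)).mul
      (hsnoc_k k)).aestronglyMeasurable, ?_⟩
    rw [hasFiniteIntegral_iff_norm]
    exact (hCS k).trans_lt (ENNReal.mul_lt_top
      (ENNReal.rpow_lt_top_of_nonneg (by norm_num) hfs)
      (ENNReal.rpow_lt_top_of_nonneg (by norm_num) hk.ne))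
  · calc ((n : ℝ≥0∞) + 1) * ∫⁻ k, ENNReal.ofReal
          (‖∫ κ, (starRingEnd ℂ) (f κ) * Ψ (Fin.snoc k κ) ∂μ‖ ^ 2) ∂νn
        ≤ ((n : ℝ≥0∞) + 1) * (A * ∫⁻ k, B k ∂νn) := mul_le_mul_right hint _
      _ = A * (((n : ℝ≥0∞) + 1) * ∫⁻ k, B k ∂νn) := by ring
      _ ≤ A * C := by
          refine mul_le_mul_right ?_ A
          rw [hBint]
          exact hsumC
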